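/- Let p ≥ 2 be a real number. Then for every integer h ≥ 1, (∑_{j=h+1}^∞ j^{−p}) · ∏_{j=2}^{h} (1 + j^{−p} / (j^{p−1} · ∑_{i=j}^∞ i^{−p})) ≤ e. -/

import Mathlib

open Finset Filter

private lemma summ_aux (p : ℝ) (hp : 2 ≤ p) (m : ℕ) :
    Summable (fun k : ℕ => ((m + k : ℕ) : ℝ) ^ (-p)) := by
  have h1 : Summable (fun n : ℕ => (n : ℝ) ^ (-p)) :=
    Real.summable_nat_rpow.2 (by linarith)
  have h2 := (summable_nat_add_iff m).2 h1
  exact h2.congr (by intro k; simp [add_comm])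

private lemma telescope_aux (h : ℕ) (hh : 1 ≤ h) :
    HasSum (fun k : ℕ => 1 / ((h : ℝ) + k) - 1 / ((h : ℝ) + k + 1)) (1 / h) := by
  have hnn : ∀ k : ℕ, 0 ≤ 1 / ((h : ℝ) + k) - 1 / ((h : ℝ) + k + 1) := by
    intro k
    have h1 : (0:ℝ) < (h : ℝ) + k := by positivity
    have : 1 / ((h : ℝ) + k + 1) ≤ 1 / ((h : ℝ) + k) :=
      one_div_le_one_div_of_le h1 (by linarith)
    linarith
  rw [hasSum_iff_tendsto_nat_of_nonneg hnn]
  have hps : ∀ N : ℕ, ∑ k ∈ range N, (1 / ((h : ℝ) + k) - 1 / ((h : ℝ) + k + 1))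
      = 1 / h - 1 / ((h : ℝ) + N) := by
    intro N
    have key := Finset.sum_range_sub' (fun k : ℕ => 1 / ((h : ℝ) + k)) N
    simp only [Nat.cast_add, Nat.cast_one, Nat.cast_zero, add_zero, ← add_assoc] at key
    exact key
  simp only [hps]
  have h0 : Tendsto (fun N : ℕ => 1 / ((h : ℝ) + N)) atTop (nhds 0) := by
    simp only [one_div]
    exact Tendsto.comp tendsto_inv_atTop_zero
      (tendsto_atTop_add_const_left atTop (h : ℝ) tendsto_natCast_atTop_atTop)
  have := tendsto_const_nhds (x := (1 / h : ℝ)) (f := atTop (α := ℕ)) |>.sub h0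
  simpa using this

private lemma tail_aux (p : ℝ) (hp : 2 ≤ p) (h : ℕ) (hh : 1 ≤ h) :
    (∑' k : ℕ, ((h + 1 + k : ℕ) : ℝ) ^ (-p)) ≤ 1 / h := by
  have htel := telescope_aux h hh
  have hterm : ∀ k : ℕ, ((h + 1 + k : ℕ) : ℝ) ^ (-p)
      ≤ 1 / ((h : ℝ) + k) - 1 / ((h : ℝ) + k + 1) := by
    intro k
    set a : ℝ := (h : ℝ) + k with ha
    have ha1 : (1:ℝ) ≤ a := by
      have h1 : (1:ℝ) ≤ (h:ℝ) := by exact_mod_cast hh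
      have h2 : (0:ℝ) ≤ (k:ℝ) := Nat.cast_nonneg k
      simp only [ha]; linarith
    have hb : ((h + 1 + k : ℕ) : ℝ) = a + 1 := by push_cast; ring
    rw [hb]
    have hb1 : (1:ℝ) ≤ a + 1 := by linarith
    have h1 : (a + 1) ^ (-p) ≤ (a + 1) ^ (-(2:ℝ)) :=
      Real.rpow_le_rpow_of_exponent_le hb1 (by linarith)
    have h2 : (a + 1) ^ (-(2:ℝ)) = ((a+1) * (a+1))⁻¹ := by
      rw [Real.rpow_neg (by linarith), show ((2:ℝ)) = ((2:ℕ):ℝ) by norm_num,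
        Real.rpow_natCast]
      ring_nf
    have h3 : ((a+1) * (a+1))⁻¹ ≤ (a * (a+1))⁻¹ := by
      apply inv_anti₀
      · positivity
      · nlinarith
    have h4 : (a * (a+1))⁻¹ = 1 / a - 1 / (a + 1) := by
      field_simp
      ring
    calc (a + 1) ^ (-p) ≤ (a + 1) ^ (-(2:ℝ)) := h1
      _ = ((a+1) * (a+1))⁻¹ := h2
      _ ≤ (a * (a+1))⁻¹ := h3
      _ = 1 / a - 1 / (a + 1) := h4
  have := Summable.tsum_le_tsum hterm (summ_aux p hp (h+1)) htel.summable
  calc (∑' k : ℕ, ((h + 1 + k : ℕ) : ℝ) ^ (-p))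
      ≤ ∑' k : ℕ, (1 / ((h : ℝ) + k) - 1 / ((h : ℝ) + k + 1)) := this
    _ = 1 / h := htel.tsum_eq

private lemma prod_one_add_inv (n : ℕ) (hn : 1 ≤ n) :
    ∏ j ∈ Finset.Icc 2 n, (1 + 1 / (j : ℝ)) = ((n : ℝ) + 1) / 2 := by
  induction n, hn using Nat.le_induction with
  | base => simp
  | succ n hn ih =>
    rw [Finset.prod_Icc_succ_top (by omega : 2 ≤ n + 1), ih]
    have : ((n:ℝ) + 1) ≠ 0 := by positivity
    push_cast
    field_simp

theorem stmt_9 (p : ℝ) (hp : 2 ≤ p) (h : ℕ) (hh : 1 ≤ h) :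
    (∑' k : ℕ, ((h + 1 + k : ℕ) : ℝ) ^ (-p)) *
      ∏ j ∈ Finset.Icc 2 h,
        (1 + (j : ℝ) ^ (-p) / ((j : ℝ) ^ (p - 1) * ∑' i : ℕ, ((j + i : ℕ) : ℝ) ^ (-p)))
      ≤ Real.exp 1 := by
  -- factor bounds
  have hfac : ∀ j ∈ Finset.Icc 2 h,
      1 + (j : ℝ) ^ (-p) / ((j : ℝ) ^ (p - 1) * ∑' i : ℕ, ((j + i : ℕ) : ℝ) ^ (-p))
        ≤ 1 + 1 / (j : ℝ) := by
    intro j hj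
    have hj2 : 2 ≤ j := (Finset.mem_Icc.1 hj).1
    have hj1 : (1:ℝ) ≤ (j:ℝ) := by exact_mod_cast Nat.one_le_of_lt hj2
    have hj0 : (0:ℝ) < (j:ℝ) := by linarith
    have hΓ : (j : ℝ) ^ (-p) ≤ ∑' i : ℕ, ((j + i : ℕ) : ℝ) ^ (-p) := by
      have := Summable.le_tsum (summ_aux p hp j) 0 (fun i _ => by positivity)
      simpa using this
    have hΓpos : (0:ℝ) < ∑' i : ℕ, ((j + i : ℕ) : ℝ) ^ (-p) :=
      lt_of_lt_of_le (by positivity) hΓ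
    have hden : (0:ℝ) < (j : ℝ) ^ (p - 1) * ∑' i : ℕ, ((j + i : ℕ) : ℝ) ^ (-p) := by
      have : (0:ℝ) < (j:ℝ) ^ (p-1) := Real.rpow_pos_of_pos hj0 _
      positivity
    have key : (j : ℝ) * (j : ℝ) ^ (-p)
        ≤ (j : ℝ) ^ (p - 1) * ∑' i : ℕ, ((j + i : ℕ) : ℝ) ^ (-p) := by
      have h1 : (j : ℝ) * (j : ℝ) ^ (-p) = (j:ℝ) ^ (1 - p) := by
        rw [Real.rpow_sub hj0, Real.rpow_one, Real.rpow_neg (le_of_lt hj0)]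
        field_simp
      have h2 : (j:ℝ) ^ (1 - p) ≤ (j:ℝ) ^ (-(1:ℝ)) :=
        Real.rpow_le_rpow_of_exponent_le hj1 (by linarith)
      have h3 : (j:ℝ) ^ (-(1:ℝ)) = (j:ℝ)^(p-1) * (j:ℝ)^(-p) := by
        rw [← Real.rpow_add hj0]; ring_nf
      have h4 : (j:ℝ)^(p-1) * (j:ℝ)^(-p)
          ≤ (j : ℝ) ^ (p - 1) * ∑' i : ℕ, ((j + i : ℕ) : ℝ) ^ (-p) :=
        mul_le_mul_of_nonneg_left hΓ (le_of_lt (Real.rpow_pos_of_pos hj0 _))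
      linarith [h1 ▸ (h2.trans (h3 ▸ h4))]
    have : (j : ℝ) ^ (-p) / ((j : ℝ) ^ (p - 1) * ∑' i : ℕ, ((j + i : ℕ) : ℝ) ^ (-p))
        ≤ 1 / (j:ℝ) := by
      rw [div_le_div_iff₀ hden hj0]
      linarith [key]
    linarith
  have hfacnn : ∀ j ∈ Finset.Icc 2 h,
      0 ≤ 1 + (j : ℝ) ^ (-p) / ((j : ℝ) ^ (p - 1) * ∑' i : ℕ, ((j + i : ℕ) : ℝ) ^ (-p)) := by
    intro j hj
    have hj2 : 2 ≤ j := (Finset.mem_Icc.1 hj).1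
    have hj0 : (0:ℝ) < (j:ℝ) := by exact_mod_cast Nat.pos_of_ne_zero (by omega)
    have hΓ : (j : ℝ) ^ (-p) ≤ ∑' i : ℕ, ((j + i : ℕ) : ℝ) ^ (-p) := by
      have := Summable.le_tsum (summ_aux p hp j) 0 (fun i _ => by positivity)
      simpa using this
    have hΓpos : (0:ℝ) < ∑' i : ℕ, ((j + i : ℕ) : ℝ) ^ (-p) :=
      lt_of_lt_of_le (by positivity) hΓ
    have : (0:ℝ) < (j:ℝ)^(p-1) := Real.rpow_pos_of_pos hj0 _
    positivity
  have hP : (∏ j ∈ Finset.Icc 2 h,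
      (1 + (j : ℝ) ^ (-p) / ((j : ℝ) ^ (p - 1) * ∑' i : ℕ, ((j + i : ℕ) : ℝ) ^ (-p))))
      ≤ ((h : ℝ) + 1) / 2 := by
    rw [← prod_one_add_inv h hh]
    exact Finset.prod_le_prod hfacnn hfac
  have hT := tail_aux p hp h hh
  have hTnn : 0 ≤ ∑' k : ℕ, ((h + 1 + k : ℕ) : ℝ) ^ (-p) :=
    tsum_nonneg (fun k => by positivity)
  have hPnn : 0 ≤ ∏ j ∈ Finset.Icc 2 h,
      (1 + (j : ℝ) ^ (-p) / ((j : ℝ) ^ (p - 1) * ∑' i : ℕ, ((j + i : ℕ) : ℝ) ^ (-p))) :=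
    Finset.prod_nonneg hfacnn
  have hmul : (∑' k : ℕ, ((h + 1 + k : ℕ) : ℝ) ^ (-p)) *
      (∏ j ∈ Finset.Icc 2 h,
        (1 + (j : ℝ) ^ (-p) / ((j : ℝ) ^ (p - 1) * ∑' i : ℕ, ((j + i : ℕ) : ℝ) ^ (-p))))
      ≤ (1 / h) * (((h : ℝ) + 1) / 2) :=
    mul_le_mul hT hP hPnn (by positivity)
  have hh1 : (1:ℝ) ≤ (h:ℝ) := by exact_mod_cast hh
  have hfin : (1 / (h:ℝ)) * (((h : ℝ) + 1) / 2) ≤ 1 := by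
    rw [div_mul_eq_mul_div, one_mul, div_le_one (by linarith)]
    rw [div_le_iff₀ (by norm_num : (0:ℝ) < 2)]
    linarith
  calc _ ≤ (1 / (h:ℝ)) * (((h : ℝ) + 1) / 2) := hmul
    _ ≤ 1 := hfin
    _ ≤ Real.exp 1 := by
        have := Real.add_one_le_exp (1:ℝ)
        linarith
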